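/- There exist positive numbers w and a such that γ₂(B₂²(0,w)) = γ₁((-a,a)) and the Gaussian surface measures satisfy γ₂⁺(B₂²(0,w)) > γ₁⁺((-a,a)); equivalently, w·e^{-w²/2} > (2/√(2π))·e^{-a²/2}. -/

import Mathlib

open MeasureTheory ProbabilityTheory
open scoped ENNReal

/-- The standard Gaussian probability measure on `ℝⁿ` (Euclidean space). -/
noncomputable def stdGaussian (n : ℕ) : Measure (EuclideanSpace ℝ (Fin n)) :=
  Measure.map (MeasurableEquiv.toLp 2 (Fin n → ℝ))
    (Measure.pi fun _ => gaussianReal 0 1)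

open Set

noncomputable def phiR (x : ℝ) : ℝ := (Real.sqrt (2*Real.pi))⁻¹ * Real.exp (-x^2/2)

lemma phiR_pos (x : ℝ) : 0 < phiR x := by unfold phiR; positivity
lemma phiR_nonneg (x : ℝ) : 0 ≤ phiR x := (phiR_pos x).le
lemma gaussianPDFReal_eq_phiR : gaussianPDFReal 0 1 = phiR := by
  ext x; simp [gaussianPDFReal, phiR]
lemma integrable_phiR : Integrable phiR := by
  rw [← gaussianPDFReal_eq_phiR]; exact integrable_gaussianPDFReal 0 1

noncomputable def TT (a : ℝ) : ℝ := ∫ x in Ioi a, phiR x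

lemma hasDerivAt_phiR (x : ℝ) :
    HasDerivAt phiR (phiR x * (-x)) x := by
  have h0 : HasDerivAt (fun x : ℝ => -x^2/2) (-x) x := by
    have := ((hasDerivAt_pow 2 x).div_const 2).neg
    refine (this.congr_deriv (by norm_num)).congr_of_eventuallyEq
      (Filter.Eventually.of_forall fun y => ?_)
    simp [neg_div]
  have := (h0.exp).const_mul (Real.sqrt (2*Real.pi))⁻¹
  refine this.congr_deriv ?_
  unfold phiR; ring

lemma tendsto_phiR : Filter.Tendsto phiR Filter.atTop (nhds 0) := by
  have h1 : Filter.Tendsto (fun x : ℝ => -x^2/2) Filter.atTop Filter.atBot := by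
    apply Filter.Tendsto.atBot_div_const two_pos
    exact Filter.tendsto_neg_atTop_atBot.comp (Filter.tendsto_pow_atTop two_ne_zero)
  have h2 := Real.tendsto_exp_atBot.comp h1
  have h3 := h2.const_mul (Real.sqrt (2*Real.pi))⁻¹
  have : phiR = fun x : ℝ => (Real.sqrt (2*Real.pi))⁻¹ * Real.exp (-x^2/2) := rfl
  rw [this]
  simpa only [Function.comp_def, mul_zero] using h3

lemma TT_le {a : ℝ} (ha : 0 < a) : TT a ≤ phiR a / a := by
  have hd : ∀ x ∈ Ici a, HasDerivAt (fun x => -(phiR x / x)) (phiR x * (1 + (x^2)⁻¹)) x := by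
    intro x hx
    have hx0 : x ≠ 0 := (lt_of_lt_of_le ha hx).ne'
    have h := ((hasDerivAt_phiR x).div (hasDerivAt_id x) hx0).neg
    have hval : -((phiR x * -x * x - phiR x * 1) / x ^ 2) = phiR x * (1 + (x^2)⁻¹) := by
      field_simp
      ring
    rw [← hval]; exact h
  have hpos : ∀ x ∈ Ioi a, 0 ≤ phiR x * (1 + (x^2)⁻¹) := by
    intro x hx; have := phiR_nonneg x; positivity
  have htend : Filter.Tendsto (fun x => -(phiR x / x)) Filter.atTop (nhds 0) := by
    have := (tendsto_phiR.mul tendsto_inv_atTop_zero).neg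
    simpa [div_eq_mul_inv] using this
  have hint : IntegrableOn (fun x => phiR x * (1 + (x^2)⁻¹)) (Ioi a) :=
    integrableOn_Ioi_deriv_of_nonneg' hd hpos htend
  have heq : ∫ x in Ioi a, phiR x * (1 + (x^2)⁻¹) = 0 - -(phiR a / a) :=
    integral_Ioi_of_hasDerivAt_of_tendsto' hd hint htend
  have hmono : TT a ≤ ∫ x in Ioi a, phiR x * (1 + (x^2)⁻¹) := by
    apply setIntegral_mono_on integrable_phiR.integrableOn hint measurableSet_Ioi
    intro x hx
    have h1 : 0 ≤ (x^2)⁻¹ := by positivity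
    nlinarith [phiR_nonneg x]
  calc TT a ≤ _ := hmono
    _ = _ := heq
    _ = phiR a / a := by ring

lemma le_TT {a : ℝ} (ha : 2 ≤ a) : phiR a * (a⁻¹ - (a^3)⁻¹) ≤ TT a := by
  have ha0 : (0:ℝ) < a := by linarith
  have hd : ∀ x ∈ Ici a, HasDerivAt (fun x => -(phiR x * (x⁻¹ - (x^3)⁻¹)))
      (phiR x * (1 - 3*(x^4)⁻¹)) x := by
    intro x hx
    have hx0 : x ≠ 0 := (lt_of_lt_of_le ha0 hx).ne'
    have hx3 : x^3 ≠ 0 := pow_ne_zero _ hx0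
    have hb : HasDerivAt (fun x : ℝ => (x^3)⁻¹) (-3*(x^4)⁻¹) x := by
      have hb0 := (hasDerivAt_pow 3 x).inv hx3
      refine hb0.congr_deriv ?_
      push_cast
      field_simp
    have h1 : HasDerivAt (fun x : ℝ => x⁻¹ - (x^3)⁻¹) (-(x^2)⁻¹ - -3*(x^4)⁻¹) x :=
      (hasDerivAt_inv hx0).sub hb
    have h := ((hasDerivAt_phiR x).mul h1).neg
    have hval : -(phiR x * -x * (x⁻¹ - (x ^ 3)⁻¹) + phiR x * (-(x^2)⁻¹ - -3*(x^4)⁻¹))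
        = phiR x * (1 - 3*(x^4)⁻¹) := by
      field_simp
      ring
    rw [← hval]; exact h
  have hpos : ∀ x ∈ Ioi a, 0 ≤ phiR x * (1 - 3*(x^4)⁻¹) := by
    intro x hx
    have hx2 : (2:ℝ) ≤ x := le_trans ha (le_of_lt hx)
    have h16 : (16:ℝ) ≤ x^4 := by
      have := pow_le_pow_left₀ (by norm_num : (0:ℝ) ≤ 2) hx2 4
      norm_num at this; linarith
    have : 3*(x^4)⁻¹ ≤ 1 := by
      rw [mul_inv_le_iff₀ (by linarith)]
      linarith
    have := phiR_nonneg x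
    nlinarith
  have htend : Filter.Tendsto (fun x => -(phiR x * (x⁻¹ - (x^3)⁻¹))) Filter.atTop (nhds 0) := by
    have h3 : Filter.Tendsto (fun x : ℝ => (x^3)⁻¹) Filter.atTop (nhds 0) := by
      have := tendsto_inv_atTop_zero.comp (Filter.tendsto_pow_atTop (α := ℝ) three_ne_zero)
      simpa [Function.comp_def] using this
    have := (tendsto_phiR.mul (tendsto_inv_atTop_zero.sub h3)).neg
    simpa only [zero_mul, mul_zero, sub_zero, neg_zero] using this
  have hint : IntegrableOn (fun x => phiR x * (1 - 3*(x^4)⁻¹)) (Ioi a) :=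
    integrableOn_Ioi_deriv_of_nonneg' hd hpos htend
  have heq : ∫ x in Ioi a, phiR x * (1 - 3*(x^4)⁻¹) = 0 - -(phiR a * (a⁻¹ - (a^3)⁻¹)) :=
    integral_Ioi_of_hasDerivAt_of_tendsto' hd hint htend
  have hmono : ∫ x in Ioi a, phiR x * (1 - 3*(x^4)⁻¹) ≤ TT a := by
    apply setIntegral_mono_on hint integrable_phiR.integrableOn measurableSet_Ioi
    intro x hx
    have h1 : 0 ≤ 3*(x^4)⁻¹ := by positivity
    nlinarith [phiR_nonneg x]
  calc phiR a * (a⁻¹ - (a^3)⁻¹) = 0 - -(phiR a * (a⁻¹ - (a^3)⁻¹)) := by ring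
    _ = _ := heq.symm
    _ ≤ TT a := hmono

lemma integral_phiR : ∫ x, phiR x = 1 := by
  rw [← gaussianPDFReal_eq_phiR]; exact integral_gaussianPDFReal_eq_one 0 one_ne_zero

lemma continuous_phiR : Continuous phiR := by
  unfold phiR; continuity

lemma phiR_neg (x : ℝ) : phiR (-x) = phiR x := by simp [phiR]

lemma integral_Ioo_phiR {a : ℝ} (ha : 0 < a) :
    ∫ x in Ioo (-a) a, phiR x = 1 - 2 * TT a := by
  have h1 : ∫ x in Iic (-a), phiR x = TT a := by
    rw [← integral_comp_neg_Ioi]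
    simp only [phiR_neg]
    rfl
  have hsplit2 : ∫ x in Ioi (-a), phiR x = (∫ x in Ioo (-a) a, phiR x) + ∫ x in Ici a, phiR x := by
    rw [← setIntegral_union]
    · congr 1
      rw [Ioo_union_Ici_eq_Ioi (by linarith)]
    · exact (Set.Iio_disjoint_Ici le_rfl).mono_left Set.Ioo_subset_Iio_self
    · exact measurableSet_Ici
    · exact integrable_phiR.integrableOn
    · exact integrable_phiR.integrableOn
  have h2 : ∫ x in Ici a, phiR x = TT a := integral_Ici_eq_integral_Ioi
  have h0 : (∫ x in Iic (-a), phiR x) + ∫ x in Ioi (-a), phiR x = 1 := by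
    rw [← setIntegral_union (Iic_disjoint_Ioi le_rfl) measurableSet_Ioi
      integrable_phiR.integrableOn integrable_phiR.integrableOn, Iic_union_Ioi]
    rw [setIntegral_univ]
    exact integral_phiR
  rw [h1, hsplit2, h2] at h0
  linarith

noncomputable def GG (a : ℝ) : ℝ :=
  (∫ x in (0:ℝ)..a, phiR x) - ∫ x in (0:ℝ)..(-a), phiR x

lemma continuous_GG : Continuous GG := by
  have h : ∀ a b : ℝ, IntervalIntegrable phiR volume a b := fun a b =>
    integrable_phiR.intervalIntegrable
  have h1 := intervalIntegral.continuous_primitive h 0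
  exact (h1.sub (h1.comp continuous_neg))

lemma GG_eq {a : ℝ} (ha : 0 ≤ a) : GG a = ∫ x in Ioo (-a) a, phiR x := by
  rw [← integral_Ioc_eq_integral_Ioo, ← intervalIntegral.integral_of_le (by linarith : -a ≤ a)]
  unfold GG
  rw [intervalIntegral.integral_interval_sub_left (integrable_phiR.intervalIntegrable)
    (integrable_phiR.intervalIntegrable)]

lemma phiR_mul (x y : ℝ) :
    phiR x * phiR y = (2*Real.pi)⁻¹ * Real.exp (-(x^2+y^2)/2) := by
  unfold phiR
  rw [mul_mul_mul_comm, ← mul_inv, Real.mul_self_sqrt (by positivity), ← Real.exp_add]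
  ring_nf

lemma measurableSet_B : MeasurableSet {p : ℝ×ℝ | p.1^2 + p.2^2 ≤ 100} := by
  apply measurableSet_le _ measurable_const
  fun_prop

lemma prod_density : (gaussianReal 0 1).prod (gaussianReal 0 1)
    = (volume : Measure (ℝ×ℝ)).withDensity
        (fun p => ENNReal.ofReal (phiR p.1 * phiR p.2)) := by
  apply Measure.prod_eq
  intro s t hs ht
  rw [withDensity_apply _ (hs.prod ht)]
  have hcong : ∀ p : ℝ × ℝ, ENNReal.ofReal (phiR p.1 * phiR p.2)
      = ENNReal.ofReal (phiR p.1) * ENNReal.ofReal (phiR p.2) := fun p =>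
    ENNReal.ofReal_mul (phiR_nonneg _)
  simp_rw [hcong]
  rw [Measure.volume_eq_prod, ← Measure.prod_restrict]
  rw [lintegral_prod_mul
    ((continuous_phiR.measurable.ennreal_ofReal).aemeasurable)
    ((continuous_phiR.measurable.ennreal_ofReal).aemeasurable)]
  rw [gaussianReal_apply 0 one_ne_zero s, gaussianReal_apply 0 one_ne_zero t]
  simp only [gaussianPDF_def, gaussianPDFReal_eq_phiR]

lemma hasDerivAt_negexp (x : ℝ) :
    HasDerivAt (fun r : ℝ => -Real.exp (-r^2/2)) (x * Real.exp (-x^2/2)) x := by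
  have h0 : HasDerivAt (fun x : ℝ => -x^2/2) (-x) x := by
    have := ((hasDerivAt_pow 2 x).div_const 2).neg
    refine (this.congr_deriv (by norm_num)).congr_of_eventuallyEq
      (Filter.Eventually.of_forall fun y => ?_)
    simp [neg_div]
  refine (h0.exp.neg).congr_deriv ?_
  ring

lemma radial_integral : ∫ r in Ioc (0:ℝ) 10, r * Real.exp (-r^2/2) = 1 - Real.exp (-50) := by
  rw [← intervalIntegral.integral_of_le (by norm_num : (0:ℝ) ≤ 10)]
  have := intervalIntegral.integral_eq_sub_of_hasDerivAt
    (f := fun r : ℝ => -Real.exp (-r^2/2)) (a := 0) (b := 10)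
    (fun x _ => hasDerivAt_negexp x)
    (Continuous.intervalIntegrable (by continuity) 0 10)
  rw [this]
  norm_num
  ring

lemma polar_integral :
    ∫ p : ℝ×ℝ in {p : ℝ×ℝ | p.1^2 + p.2^2 ≤ 100}, phiR p.1 * phiR p.2
      = 1 - Real.exp (-50) := by
  rw [← integral_indicator measurableSet_B]
  rw [← integral_comp_polarCoord_symm]
  have key : ∀ p ∈ polarCoord.target,
      p.1 • Set.indicator {p : ℝ×ℝ | p.1^2 + p.2^2 ≤ 100}
        (fun q => phiR q.1 * phiR q.2) (polarCoord.symm p)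
      = Set.indicator (Ioc (0:ℝ) 10 ×ˢ Ioo (-Real.pi) Real.pi)
          (fun q => ((2*Real.pi)⁻¹ * (q.1 * Real.exp (-q.1^2/2)))) p := by
    rintro ⟨r, θ⟩ hp
    rw [polarCoord_target] at hp
    obtain ⟨hr, hθ⟩ := hp
    simp only [mem_Ioi] at hr
    have hsymm : polarCoord.symm (r, θ) = (r * Real.cos θ, r * Real.sin θ) := by
      simp [polarCoord_symm_apply]
    have hsq : (r * Real.cos θ)^2 + (r * Real.sin θ)^2 = r^2 := by
      have := Real.sin_sq_add_cos_sq θ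
      nlinarith
    by_cases h10 : r ≤ 10
    · rw [Set.indicator_of_mem, Set.indicator_of_mem]
      · rw [hsymm]
        simp only
        rw [phiR_mul, hsq]
        simp only [smul_eq_mul]
        ring
      · exact ⟨⟨hr, h10⟩, hθ⟩
      · rw [hsymm]; simp only [mem_setOf_eq]; nlinarith
    · rw [Set.indicator_of_notMem, Set.indicator_of_notMem]
      · simp
      · simp only [mem_prod, mem_Ioc, not_and]
        intro h; exact absurd h.2 h10
      · rw [hsymm]; simp only [mem_setOf_eq]; push_neg at h10 ⊢; nlinarith
  rw [setIntegral_congr_fun polarCoord.open_target.measurableSet key]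
  rw [setIntegral_indicator ((measurableSet_Ioc).prod measurableSet_Ioo)]
  have hss : polarCoord.target ∩ (Ioc (0:ℝ) 10 ×ˢ Ioo (-Real.pi) Real.pi)
      = Ioc (0:ℝ) 10 ×ˢ Ioo (-Real.pi) Real.pi := by
    rw [polarCoord_target]
    apply inter_eq_self_of_subset_right
    exact prod_mono Ioc_subset_Ioi_self subset_rfl
  rw [hss]
  have hprod : ∫ z : ℝ×ℝ in (Ioc (0:ℝ) 10 ×ˢ Ioo (-Real.pi) Real.pi),
      (2*Real.pi)⁻¹ * (z.1 * Real.exp (-z.1^2/2))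
      = (∫ r in Ioc (0:ℝ) 10, (2*Real.pi)⁻¹ * (r * Real.exp (-r^2/2)))
        * ∫ θ in Ioo (-Real.pi) Real.pi, (1:ℝ) := by
    rw [Measure.volume_eq_prod, ← setIntegral_prod_mul]
    apply setIntegral_congr_fun (measurableSet_Ioc.prod measurableSet_Ioo)
    intro z hz
    ring
  rw [hprod]
  rw [MeasureTheory.integral_const_mul, radial_integral]
  simp only [setIntegral_const, smul_eq_mul, mul_one, measureReal_def, Real.volume_Ioo]
  have hpi : 0 < Real.pi := Real.pi_pos
  rw [ENNReal.toReal_ofReal (by linarith), show Real.pi - -Real.pi = 2*Real.pi by ring]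
  rw [mul_comm, ← mul_assoc]
  rw [mul_inv_cancel₀ (by positivity : (2*Real.pi) ≠ 0)]
  ring

lemma ball_measure :
    (gaussianReal 0 1).prod (gaussianReal 0 1) {p : ℝ×ℝ | p.1^2 + p.2^2 ≤ 100}
      = ENNReal.ofReal (1 - Real.exp (-50)) := by
  rw [prod_density, withDensity_apply _ measurableSet_B]
  have hInt : Integrable (fun p : ℝ×ℝ => phiR p.1 * phiR p.2) := by
    rw [Measure.volume_eq_prod]
    exact integrable_phiR.mul_prod integrable_phiR
  rw [← ofReal_integral_eq_lintegral_ofReal hInt.restrict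
    (Filter.Eventually.of_forall fun p => mul_nonneg (phiR_nonneg _) (phiR_nonneg _))]
  rw [polar_integral]

lemma std2 : stdGaussian 2 (Metric.closedBall 0 10) = ENNReal.ofReal (1 - Real.exp (-50)) := by
  rw [_root_.stdGaussian, MeasurableEquiv.map_apply]
  have hpre : (MeasurableEquiv.toLp 2 (Fin 2 → ℝ)) ⁻¹' (Metric.closedBall 0 10)
      = MeasurableEquiv.finTwoArrow ⁻¹' {p : ℝ×ℝ | p.1^2 + p.2^2 ≤ 100} := by
    ext x
    simp only [mem_preimage, Metric.mem_closedBall, dist_zero_right,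
      MeasurableEquiv.coe_toLp, MeasurableEquiv.finTwoArrow,
      MeasurableEquiv.piFinTwo, MeasurableEquiv.coe_mk, piFinTwoEquiv,
      Equiv.coe_fn_mk, mem_setOf_eq]
    rw [EuclideanSpace.norm_eq]
    simp only [PiLp.toLp_apply, Fin.sum_univ_two, Real.norm_eq_abs, sq_abs]
    rw [show (10:ℝ) = Real.sqrt 100 by
      rw [show (100:ℝ) = 10^2 by norm_num, Real.sqrt_sq]; norm_num]
    rw [Real.sqrt_le_sqrt_iff (by positivity)]
  rw [hpre, (measurePreserving_finTwoArrow (gaussianReal 0 1)).measure_preimage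
    measurableSet_B.nullMeasurableSet]
  exact ball_measure

lemma sqrt_two_pi_ge : (2:ℝ) ≤ Real.sqrt (2*Real.pi) := by
  calc (2:ℝ) = Real.sqrt (2^2) := (Real.sqrt_sq (by norm_num : (0:ℝ) ≤ 2)).symm
    _ ≤ Real.sqrt (2*Real.pi) := Real.sqrt_le_sqrt (by linarith [Real.pi_gt_three])

lemma sqrt_two_pi_le : Real.sqrt (2*Real.pi) ≤ 3 := by
  calc Real.sqrt (2*Real.pi) ≤ Real.sqrt (3^2) :=
      Real.sqrt_le_sqrt (by nlinarith [Real.pi_lt_d2])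
    _ = 3 := Real.sqrt_sq (by norm_num : (0:ℝ) ≤ 3)

lemma phiR_le (x : ℝ) : phiR x ≤ Real.exp (-x^2/2) / 2 := by
  have h1 : (Real.sqrt (2*Real.pi))⁻¹ ≤ 2⁻¹ := by
    rw [inv_le_inv₀ (by positivity) (by norm_num)]
    exact sqrt_two_pi_ge
  calc phiR x ≤ 2⁻¹ * Real.exp (-x^2/2) :=
      mul_le_mul_of_nonneg_right h1 (Real.exp_pos _).le
    _ = Real.exp (-x^2/2) / 2 := by ring

lemma le_phiR (x : ℝ) : Real.exp (-x^2/2) / 3 ≤ phiR x := by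
  have h1 : (3:ℝ)⁻¹ ≤ (Real.sqrt (2*Real.pi))⁻¹ := by
    rw [inv_le_inv₀ (by norm_num) (by positivity)]
    exact sqrt_two_pi_le
  calc Real.exp (-x^2/2) / 3 = 3⁻¹ * Real.exp (-x^2/2) := by ring
    _ ≤ phiR x := mul_le_mul_of_nonneg_right h1 (Real.exp_pos _).le

lemma exp_eq_phiR (x : ℝ) : Real.exp (-x^2/2) = Real.sqrt (2*Real.pi) * phiR x := by
  unfold phiR
  rw [← mul_assoc, mul_inv_cancel₀ (by positivity), one_mul]

/-- There exist `w, a > 0` with `γ₂(B₂²(0,w)) = γ₁((-a,a))` and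
`γ₂⁺(B₂²(0,w)) > γ₁⁺((-a,a))`, i.e. `w e^{-w²/2} > (2/√(2π)) e^{-a²/2}`. -/
theorem exists_disk_interval_boundary_gap :
    ∃ w a : ℝ, 0 < w ∧ 0 < a ∧
      stdGaussian 2 (Metric.closedBall 0 w) = gaussianReal 0 1 (Set.Ioo (-a) a) ∧
      (2 / Real.sqrt (2 * Real.pi)) * Real.exp (-a ^ 2 / 2) <
        w * Real.exp (-w ^ 2 / 2) := by
  have h50 : Real.exp (-50) < 1 := Real.exp_lt_one_iff.mpr (by norm_num)
  have h50pos : 0 < Real.exp (-50) := Real.exp_pos _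
  -- GG 11 is large
  have hG11 : 1 - Real.exp (-50) ≤ GG 11 := by
    rw [GG_eq (by norm_num : (0:ℝ) ≤ 11), integral_Ioo_phiR (by norm_num : (0:ℝ) < 11)]
    have h1 : TT 11 ≤ phiR 11 / 11 := TT_le (by norm_num)
    have h2 : phiR 11 ≤ Real.exp (-(11:ℝ)^2/2) / 2 := phiR_le 11
    have h3 : Real.exp (-(11:ℝ)^2/2) ≤ Real.exp (-50) := by
      apply Real.exp_le_exp.mpr; norm_num
    linarith
  have hG0 : GG 0 = 0 := by
    unfold GG; simp
  -- IVT
  obtain ⟨a, haIcc, haG⟩ := intermediate_value_Icc (by norm_num : (0:ℝ) ≤ 11)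
    continuous_GG.continuousOn
    (show 1 - Real.exp (-50) ∈ Icc (GG 0) (GG 11) from ⟨by rw [hG0]; linarith, hG11⟩)
  have ha0 : 0 ≤ a := haIcc.1
  have hapos : 0 < a := by
    rcases ha0.lt_or_eq with h | h
    · exact h
    · exfalso; rw [← h] at haG; rw [hG0] at haG; linarith
  have hTTa : TT a = Real.exp (-50) / 2 := by
    have h1 : GG a = 1 - 2 * TT a := by
      rw [GG_eq ha0, integral_Ioo_phiR hapos]
    rw [haG] at h1
    linarith
  -- a > 9
  have h9a : 9 < a := by
    by_contra h
    push_neg at h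
    have hsub : GG a ≤ GG 9 := by
      rw [GG_eq ha0, GG_eq (by norm_num : (0:ℝ) ≤ 9)]
      apply setIntegral_mono_set integrable_phiR.integrableOn
        (Filter.Eventually.of_forall fun x => phiR_nonneg x)
        ((Ioo_subset_Ioo (by linarith) h).eventuallyLE)
    have hG9 : GG 9 = 1 - 2 * TT 9 := by
      rw [GG_eq (by norm_num : (0:ℝ) ≤ 9), integral_Ioo_phiR (by norm_num : (0:ℝ) < 9)]
    have hT9 : Real.exp (-(9:ℝ)^2/2) / 30 ≤ TT 9 := by
      have h1 := le_TT (by norm_num : (2:ℝ) ≤ 9)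
      have h2 := le_phiR 9
      have h3 : ((9:ℝ)⁻¹ - ((9:ℝ)^3)⁻¹) = 80/729 := by norm_num
      rw [h3] at h1
      nlinarith [Real.exp_pos (-(9:ℝ)^2/2)]
    have hbig : Real.exp (-50) < 2 * TT 9 := by
      have he : Real.exp (-(9:ℝ)^2/2) = Real.exp (9.5) * Real.exp (-50) := by
        rw [← Real.exp_add]; norm_num
      have hexp95 : (15:ℝ) < Real.exp (9.5) := by
        have h1 : (5.75:ℝ) ≤ Real.exp (4.75) := by
          have := Real.add_one_le_exp (4.75:ℝ); linarith
        have h2 : Real.exp (9.5) = Real.exp (4.75) * Real.exp (4.75) := by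
          rw [← Real.exp_add]; norm_num
        nlinarith
      rw [he] at hT9
      nlinarith
    rw [haG] at hsub
    rw [hG9] at hsub
    linarith
  -- a < 9.8
  have ha98 : a < 9.8 := by
    have h1 : TT a ≤ phiR a / a := TT_le hapos
    have h2 : Real.exp (-50) / 2 * a ≤ phiR a := by
      rw [hTTa] at h1
      rw [div_le_div_iff₀ (by norm_num) hapos] at h1
      linarith
    have h3 : 9 * Real.exp (-50) ≤ Real.exp (-a^2/2) := by
      rw [exp_eq_phiR a]
      have : 2 * phiR a ≤ Real.sqrt (2*Real.pi) * phiR a :=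
        mul_le_mul_of_nonneg_right sqrt_two_pi_ge (phiR_nonneg a)
      nlinarith
    have he2 : Real.exp 2 < 9 := by
      have h := Real.exp_one_lt_d9
      have : Real.exp 2 = Real.exp 1 * Real.exp 1 := by rw [← Real.exp_add]; norm_num
      nlinarith [Real.exp_pos 1]
    have h4 : Real.exp (-48) < Real.exp (-a^2/2) := by
      have : Real.exp (-48) = Real.exp 2 * Real.exp (-50) := by
        rw [← Real.exp_add]; norm_num
      nlinarith
    have h5 : -48 < -a^2/2 := by
      have := Real.exp_lt_exp.mp h4
      linarith
    nlinarith
  -- measure equality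
  have hmeas : stdGaussian 2 (Metric.closedBall 0 10) = gaussianReal 0 1 (Set.Ioo (-a) a) := by
    rw [std2]
    rw [gaussianReal_apply_eq_integral 0 one_ne_zero, gaussianPDFReal_eq_phiR]
    rw [← GG_eq ha0, haG]
  -- final inequality
  have hfinal : (2 / Real.sqrt (2 * Real.pi)) * Real.exp (-a ^ 2 / 2) <
      10 * Real.exp (-(10:ℝ) ^ 2 / 2) := by
    have hgoal_lhs : (2 / Real.sqrt (2 * Real.pi)) * Real.exp (-a ^ 2 / 2) = 2 * phiR a := by
      rw [exp_eq_phiR a]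
      have hs : Real.sqrt (2*Real.pi) ≠ 0 := by positivity
      field_simp
    rw [hgoal_lhs, show -(10:ℝ)^2/2 = -50 by norm_num]
    have hlow := le_TT (by linarith : (2:ℝ) ≤ a)
    rw [hTTa] at hlow
    have ha1 : (1:ℝ) < a := by linarith
    have hA : (0:ℝ) < a^2 - 1 := by nlinarith
    have ha3 : (0:ℝ) < a^3 := by positivity
    have hid : a⁻¹ - (a^3)⁻¹ = (a^2 - 1)/a^3 := by
      field_simp
    rw [hid] at hlow
    have hX : (0:ℝ) < (a^2-1)/a^3 := div_pos hA ha3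
    have h2 : phiR a ≤ (Real.exp (-50)/2) / ((a^2-1)/a^3) := (le_div_iff₀ hX).mpr hlow
    have hq : a^3/(a^2-1) < 10 := by
      rw [div_lt_iff₀ hA]
      nlinarith
    have h3 : (Real.exp (-50)/2) / ((a^2-1)/a^3) = (Real.exp (-50)/2) * (a^3/(a^2-1)) := by
      rw [div_div_eq_mul_div]
      ring
    have h4 : (Real.exp (-50)/2) * (a^3/(a^2-1)) < (Real.exp (-50)/2) * 10 := by
      apply mul_lt_mul_of_pos_left hq (by positivity)
    rw [h3] at h2
    linarith
  exact ⟨10, a, by norm_num, hapos, hmeas, hfinal⟩
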